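/- Let V be a real inner product space of signature (p,q) with p+q≥3, and let R be an algebraic curvature tensor on V. If for every pair of orthonormal vectors x₁, x₂ (i.e. (x₁,x₁)=(x₂,x₂)=1, (x₁,x₂)=0 after complexification) the trace of the Jacobi operator vanishes on the complex null vectors x₁±i x₂, then trace J_R(x₁) = trace J_R(x₂). Consequently, if trace{J_R(·)} = 0 on all complex null vectors, then R is Einstein, i.e. there is a constant c with ρ_R(x,y) = c(x,y) for all x,y. -/

import Mathlib

/-- If the trace of the Jacobi operator of an algebraic curvature tensor vanishes on
complex null vectors, then the tensor is Einstein.  We work on the complexification,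
modelled as a complex vector space `V` with a symmetric nondegenerate bilinear form. -/
theorem jacobi_trace_null_implies_einstein
    (V : Type*) [AddCommGroup V] [Module ℂ V] [FiniteDimensional ℂ V]
    (hdim : 3 ≤ Module.finrank ℂ V)
    (B : LinearMap.BilinForm ℂ V) (hBsymm : ∀ x y, B x y = B y x)
    (hBnd : B.Nondegenerate)
    (R : V →ₗ[ℂ] V →ₗ[ℂ] V →ₗ[ℂ] V →ₗ[ℂ] ℂ)
    (hR1 : ∀ x y z w, R x y z w = R z w x y)
    (hR2 : ∀ x y z w, R x y z w = - R y x z w)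
    (hR3 : ∀ x y z w, R x y z w + R y z x w + R z x y w = 0)
    (J : V → Module.End ℂ V)
    (hJ : ∀ x y w, B (J x y) w = R y x x w)
    (ρ : LinearMap.BilinForm ℂ V) (hρsymm : ∀ x y, ρ x y = ρ y x)
    (hρ : ∀ x, ρ x x = LinearMap.trace ℂ V (J x)) :
    (∀ x₁ x₂ : V, B x₁ x₁ = 1 → B x₂ x₂ = 1 → B x₁ x₂ = 0 →
      LinearMap.trace ℂ V (J (x₁ + Complex.I • x₂)) = 0 →
      LinearMap.trace ℂ V (J (x₁ - Complex.I • x₂)) = 0 →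
      LinearMap.trace ℂ V (J x₁) = LinearMap.trace ℂ V (J x₂)) ∧
    ((∀ v : V, B v v = 0 → LinearMap.trace ℂ V (J v) = 0) →
      ∃ c : ℂ, ∀ x y, ρ x y = c * B x y) := by
  -- expansion of quadratic forms
  have expB : ∀ (t : ℂ) (x y : V), B (x + t • y) (x + t • y)
      = B x x + 2 * t * B x y + t ^ 2 * B y y := by
    intro t x y
    simp only [map_add, map_smul, LinearMap.add_apply, LinearMap.smul_apply, smul_eq_mul]
    linear_combination t * hBsymm y x
  have expρ : ∀ (t : ℂ) (x y : V), ρ (x + t • y) (x + t • y)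
      = ρ x x + 2 * t * ρ x y + t ^ 2 * ρ y y := by
    intro t x y
    simp only [map_add, map_smul, LinearMap.add_apply, LinearMap.smul_apply, smul_eq_mul]
    linear_combination t * hρsymm y x
  -- the main computation: from vanishing of the two null traces we get both conclusions
  have main : ∀ x y : V,
      LinearMap.trace ℂ V (J (x + Complex.I • y)) = 0 →
      LinearMap.trace ℂ V (J (x - Complex.I • y)) = 0 →
      ρ x y = 0 ∧ ρ x x = ρ y y := by
    intro x y h1 h2
    rw [← hρ] at h1 h2
    rw [sub_eq_add_neg, ← neg_smul] at h2
    rw [expρ] at h1 h2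
    have hI : (Complex.I : ℂ) ^ 2 = -1 := Complex.I_sq
    constructor
    · have h4 : (4 * Complex.I) * ρ x y = 0 := by linear_combination h1 - h2
      have : (4 : ℂ) * Complex.I ≠ 0 := by
        simp [Complex.I_ne_zero]
      exact (mul_eq_zero.mp h4).resolve_left this
    · linear_combination (1/2 : ℂ) * h1 + (1/2 : ℂ) * h2 - ρ y y * hI
  constructor
  · intro x₁ x₂ _ _ _ h1 h2
    rw [← hρ, ← hρ]
    exact (main x₁ x₂ h1 h2).2
  · intro hnull
    -- orthogonal basis
    obtain ⟨v, hv⟩ := LinearMap.BilinForm.exists_orthogonal_basis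
      (B := B) (LinearMap.isSymm_def.mpr fun x y => by simpa using hBsymm x y)
    have hvne : ∀ i, B (v i) (v i) ≠ 0 := fun i =>
      hv.not_isOrtho_basis_self_of_separatingLeft hBnd.1 i
    -- rescale
    have hs : ∀ i, ∃ s : ℂ, s ≠ 0 ∧ s ^ 2 * B (v i) (v i) = 1 := by
      intro i
      obtain ⟨s, hs⟩ := IsAlgClosed.exists_pow_nat_eq (k := ℂ) (B (v i) (v i))⁻¹
        (n := 2) (by norm_num)
      refine ⟨s, ?_, ?_⟩
      · intro h; rw [h] at hs; simp at hs
        exact hvne i hs.symm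
      · rw [hs, inv_mul_cancel₀ (hvne i)]
    choose s hs0 hs1 using hs
    set w : Fin (Module.finrank ℂ V) → V := fun i => s i • v i with hw
    have hww : ∀ i, B (w i) (w i) = 1 := by
      intro i; simp only [hw, map_smul, LinearMap.smul_apply, smul_eq_mul]
      linear_combination hs1 i
    have hwo : ∀ i j, i ≠ j → B (w i) (w j) = 0 := by
      intro i j hij
      simp only [hw, map_smul, LinearMap.smul_apply, smul_eq_mul]
      rw [hv hij]; ring
    -- for distinct indices, the null vector hypothesis gives the key relations
    have key : ∀ i j, i ≠ j → ρ (w i) (w j) = 0 ∧ ρ (w i) (w i) = ρ (w j) (w j) := by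
      intro i j hij
      apply main
      · apply hnull
        rw [expB, hww i, hww j, hwo i j hij, Complex.I_sq]; ring
      · apply hnull
        rw [sub_eq_add_neg, ← neg_smul, expB, hww i, hww j, hwo i j hij,
          neg_sq, Complex.I_sq]; ring
    have h3 : (3 : ℕ) ≤ Module.finrank ℂ V := hdim
    set i0 : Fin (Module.finrank ℂ V) := ⟨0, by omega⟩ with hi0
    set c : ℂ := ρ (w i0) (w i0) with hc
    have hdiag : ∀ i, ρ (w i) (w i) = c := by
      intro i
      by_cases h : i = i0
      · rw [h]
      · exact ((key i0 i (Ne.symm h)).2).symm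
    refine ⟨c, ?_⟩
    have hbasis : ∀ i j, ρ (v i) (v j) = (c • B) (v i) (v j) := by
      intro i j
      have hsne : s i * s j ≠ 0 := mul_ne_zero (hs0 i) (hs0 j)
      have hρw : ρ (w i) (w j) = (s i * s j) * ρ (v i) (v j) := by
        simp only [hw, map_smul, LinearMap.smul_apply, smul_eq_mul]; ring
      have hBw : B (w i) (w j) = (s i * s j) * B (v i) (v j) := by
        simp only [hw, map_smul, LinearMap.smul_apply, smul_eq_mul]; ring
      have : ρ (w i) (w j) = c * B (w i) (w j) := by
        by_cases h : i = j
        · subst h; rw [hdiag i, hww i, mul_one]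
        · rw [(key i j h).1, hwo i j h, mul_zero]
      rw [hρw, hBw] at this
      simp only [LinearMap.smul_apply, smul_eq_mul]
      exact mul_left_cancel₀ hsne (by linear_combination this)
    have := LinearMap.ext_basis v v hbasis
    intro x y
    rw [this]
    simp [LinearMap.smul_apply, smul_eq_mul]
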